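/- Let G be a perfect graph on vertex set {1,…,n} and let Ḡ be its complement graph. Then the polar dual H(G)° = { y ∈ ℝ^{n+1} : ⟨y,x⟩ ≤ 1 for all x ∈ H(G) } of the Hansen polytope H(G) is affinely equivalent to the Hansen polytope H(Ḡ): there is an affine automorphism of ℝ^{n+1} mapping H(Ḡ) onto H(G)°. -/

import Mathlib

/-- A finset of vertices is stable (independent) in `G` if no two of its elements are adjacent. -/
def IsStable {n : ℕ} (G : SimpleGraph (Fin n)) (I : Finset (Fin n)) : Prop :=
  ∀ ⦃a⦄, a ∈ I → ∀ ⦃b⦄, b ∈ I → ¬ G.Adj a b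

/-- The point `e_0 + ∑_{i ∈ I} e_i ∈ ℝ^{n+1}`. -/
def hansenVert {n : ℕ} (I : Finset (Fin n)) : Fin (n + 1) → ℝ :=
  fun j => Fin.cases 1 (fun i => if i ∈ I then 1 else 0) j

/-- The Hansen polytope of `G`. -/
def hansenPolytope {n : ℕ} (G : SimpleGraph (Fin n)) : Set (Fin (n + 1) → ℝ) :=
  convexHull ℝ
    {x | ∃ I : Finset (Fin n), IsStable G I ∧ (x = hansenVert I ∨ x = -hansenVert I)}

/-- The polar dual `P° = { y : ⟨y,x⟩ ≤ 1 for all x ∈ P }`. -/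
def polarDual {d : ℕ} (P : Set (Fin d → ℝ)) : Set (Fin d → ℝ) :=
  {y | ∀ x ∈ P, ∑ i, y i * x i ≤ 1}

/-- The clique number of a graph, as an element of `ℕ∞`. -/
noncomputable def cliqueNumber {V : Type*} (G : SimpleGraph V) : ℕ∞ :=
  ⨆ t ∈ {t : Finset V | G.IsClique (↑t : Set V)}, (t.card : ℕ∞)

/-- A graph is perfect if for every induced subgraph the clique number equals
the chromatic number. -/
def IsPerfect {V : Type*} (G : SimpleGraph V) : Prop :=
  ∀ s : Set V, cliqueNumber (G.induce s) = (G.induce s).chromaticNumber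

open Finset

section Finitary

variable {α : Type*}

open Classical in
/-- Max cardinality of a clique of `H` inside the finset `T`. -/
noncomputable def omegaIn (H : SimpleGraph α) (T : Finset α) : ℕ :=
  T.powerset.sup (fun C => if H.IsClique (↑C : Set α) then C.card else 0)

/-- `T` can be properly colored with colors `< m`. -/
def GoodCol (H : SimpleGraph α) (T : Finset α) (m : ℕ) : Prop :=
  ∃ f : α → ℕ, (∀ a ∈ T, f a < m) ∧ ∀ a ∈ T, ∀ b ∈ T, H.Adj a b → f a ≠ f b

theorem clique_card_le_omegaIn {H : SimpleGraph α} {T C : Finset α}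
    (h1 : C ⊆ T) (h2 : H.IsClique (↑C : Set α)) : C.card ≤ omegaIn H T := by
  classical
  have := Finset.le_sup (f := fun C : Finset α => if H.IsClique (↑C : Set α) then C.card else 0)
    (mem_powerset.2 h1)
  simpa [omegaIn, h2] using this

theorem omegaIn_le {H : SimpleGraph α} {T : Finset α} {m : ℕ}
    (h : ∀ C : Finset α, C ⊆ T → H.IsClique (↑C : Set α) → C.card ≤ m) :
    omegaIn H T ≤ m := by
  classical
  rw [omegaIn]
  refine Finset.sup_le fun C hC => ?_
  split_ifs with hcl
  · exact h C (mem_powerset.1 hC) hcl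
  · exact Nat.zero_le _

theorem omegaIn_mono {H : SimpleGraph α} {T T' : Finset α} (h : T ⊆ T') :
    omegaIn H T ≤ omegaIn H T' :=
  omegaIn_le fun C hC hcl => clique_card_le_omegaIn (hC.trans h) hcl

theorem exists_max_clique {H : SimpleGraph α} (T : Finset α) :
    ∃ C : Finset α, C ⊆ T ∧ H.IsClique (↑C : Set α) ∧ C.card = omegaIn H T := by
  classical
  obtain ⟨C, hC, heq⟩ := Finset.exists_mem_eq_sup T.powerset ⟨∅, mem_powerset.2 (empty_subset _)⟩
    (fun C : Finset α => if H.IsClique (↑C : Set α) then C.card else 0)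
  rw [show T.powerset.sup (fun C : Finset α => if H.IsClique (↑C : Set α) then C.card else 0) = omegaIn H T
    from rfl] at heq
  by_cases hcl : H.IsClique (↑C : Set α)
  · exact ⟨C, mem_powerset.1 hC, hcl, by rw [heq, if_pos hcl]⟩
  · refine ⟨∅, empty_subset _, by simp, ?_⟩
    rw [heq, if_neg hcl]
    simp

theorem GoodCol.mono {H : SimpleGraph α} {T : Finset α} {m m' : ℕ} (h : GoodCol H T m)
    (hm : m ≤ m') : GoodCol H T m' := by
  obtain ⟨f, h1, h2⟩ := h
  exact ⟨f, fun a ha => lt_of_lt_of_le (h1 a ha) hm, h2⟩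

end Finitary

/-- Transfer of the perfection hypothesis to the finitary setting. -/
theorem perfect_goodCol {n : ℕ} (G : SimpleGraph (Fin n)) (hG : IsPerfect G)
    (S : Finset (Fin n)) : GoodCol G S (omegaIn G S) := by
  classical
  set s : Set (Fin n) := ↑S with hs
  have hle : cliqueNumber (G.induce s) ≤ (omegaIn G S : ℕ∞) := by
    refine iSup₂_le fun t ht => ?_
    set C : Finset (Fin n) := t.image (fun a : ↥s => (a : Fin n)) with hCdef
    have hcl : G.IsClique (↑C : Set (Fin n)) := by
      intro x hx y hy hxy
      simp only [hCdef, coe_image, Set.mem_image, mem_coe] at hx hy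
      obtain ⟨a, ha, rfl⟩ := hx
      obtain ⟨b, hb, rfl⟩ := hy
      have hab : a ≠ b := fun h => hxy (congrArg _ h)
      have := ht (Finset.mem_coe.2 ha) (Finset.mem_coe.2 hb) hab
      simpa using this
    have hsub : C ⊆ S := by
      intro x hx
      simp only [hCdef, mem_image] at hx
      obtain ⟨a, _, rfl⟩ := hx
      exact Finset.mem_coe.1 a.2
    have hcard : C.card = t.card := Finset.card_image_of_injective _ Subtype.val_injective
    have := clique_card_le_omegaIn hsub hcl
    rw [hcard] at this
    exact_mod_cast (Nat.cast_le (α := ℕ∞)).2 this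
  have hcol : (G.induce s).Colorable (omegaIn G S) := by
    rw [← SimpleGraph.chromaticNumber_le_iff_colorable]
    rw [← hG s]
    exact hle
  obtain ⟨c⟩ := hcol
  refine ⟨fun i => if h : i ∈ S then (c ⟨i, Finset.mem_coe.2 h⟩ : ℕ) else 0, ?_, ?_⟩
  · intro a ha
    simp only [ha, dif_pos]
    exact (c ⟨a, Finset.mem_coe.2 ha⟩).2
  · intro a ha b hb hab
    simp only [ha, hb, dif_pos]
    have : (G.induce s).Adj ⟨a, Finset.mem_coe.2 ha⟩ ⟨b, Finset.mem_coe.2 hb⟩ := by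
      simp [SimpleGraph.comap, SimpleGraph.induce, hab]
    have := c.valid this
    exact fun h => this (Fin.ext h)

section Blowup

variable {V : Type*}

/-- The clique blow-up of `G`: infinitely many mutually adjacent clones of each vertex. -/
def blowup (G : SimpleGraph V) : SimpleGraph (V × ℕ) where
  Adj p q := G.Adj p.1 q.1 ∨ (p.1 = q.1 ∧ p.2 ≠ q.2)
  symm := by
    constructor
    rintro p q (h | ⟨h1, h2⟩)
    · exact Or.inl h.symm
    · exact Or.inr ⟨h1.symm, h2.symm⟩
  loopless := by
    constructor
    rintro p (h | ⟨_, h2⟩)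
    · exact G.loopless.irrefl _ h
    · exact h2 rfl

@[simp] theorem blowup_adj {G : SimpleGraph V} {p q : V × ℕ} :
    (blowup G).Adj p q ↔ G.Adj p.1 q.1 ∨ (p.1 = q.1 ∧ p.2 ≠ q.2) := Iff.rfl

theorem blowup_goodCol (G : SimpleGraph V)
    (hG : ∀ S : Finset V, GoodCol G S (omegaIn G S)) :
    ∀ T : Finset (V × ℕ), GoodCol (blowup G) T (omegaIn (blowup G) T) := by
  classical
  have main : ∀ N : ℕ, ∀ T : Finset (V × ℕ), T.card ≤ N →
      GoodCol (blowup G) T (omegaIn (blowup G) T) := by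
    intro N
    induction N with
    | zero =>
      intro T hT
      rw [Finset.card_eq_zero.1 (Nat.le_zero.1 hT)]
      exact ⟨fun _ => 0, fun a ha => absurd ha (Finset.notMem_empty _),
        fun a ha => absurd ha (Finset.notMem_empty _)⟩
    | succ N IH =>
      intro T hT
      by_cases hdup : ∃ i a b, a ≠ b ∧ (i, a) ∈ T ∧ (i, b) ∈ T
      · -- there are two clones of the same vertex in `T`
        obtain ⟨i₀, a₀, b₀, hab, h1, h2⟩ := hdup
        set v : V × ℕ := (i₀, a₀) with hv
        set v' : V × ℕ := (i₀, b₀) with hv'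
        have hvv' : v ≠ v' := by
          simp [hv, hv', Prod.ext_iff, hab]
        have hadj : (blowup G).Adj v v' := Or.inr ⟨rfl, hab⟩
        -- twins: v' has the same neighbours as v (apart from each other)
        have htwin : ∀ p : V × ℕ, p ≠ v → p ≠ v' →
            ((blowup G).Adj v' p ↔ (blowup G).Adj v p) := by
          rintro ⟨j, c⟩ hpv hpv'
          simp only [hv, hv', Ne, Prod.mk.injEq, not_and] at hpv hpv'
          by_cases hfst : j = i₀
          · subst hfst
            simp [blowup_adj, hv, hv', SimpleGraph.irrefl, Ne.symm (hpv rfl), Ne.symm (hpv' rfl)]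
          · have h' : ¬ i₀ = j := fun h => hfst h.symm
            simp [blowup_adj, hv, hv', h']
        set T' : Finset (V × ℕ) := T.erase v' with hT'
        have hvT' : v ∈ T' := Finset.mem_erase.2 ⟨hvv', h1⟩
        have hT'card : T'.card ≤ N := by
          rw [hT', Finset.card_erase_of_mem h2]
          omega
        have hT'T : T' ⊆ T := Finset.erase_subset _ _
        set m' := omegaIn (blowup G) T' with hm'
        obtain ⟨f, hflt, hfprop⟩ := IH T' hT'card
        have hm'pos : 1 ≤ m' := by
          have := clique_card_le_omegaIn (H := blowup G)
            (Finset.singleton_subset_iff.2 hvT') (by simp)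
          simpa using this
        by_cases hyes : ∃ C : Finset (V × ℕ), C ⊆ T' ∧ (blowup G).IsClique ↑C ∧
            C.card = m' ∧ v ∈ C
        · -- some maximum clique of T' contains v : extend the colouring by one colour
          obtain ⟨C, hCT', hCcl, hCcard, hvC⟩ := hyes
          have hCext : (blowup G).IsClique (↑(insert v' C) : Set (V × ℕ)) := by
            intro x hx y hy hxy
            simp only [Finset.coe_insert, Set.mem_insert_iff, Finset.mem_coe] at hx hy
            rcases hx with rfl | hx
            · rcases hy with rfl | hy
              · exact absurd rfl hxy
              · by_cases hyv : y = v
                · subst hyv; exact hadj.symm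
                · exact (htwin y hyv (Ne.symm hxy)).2
                    (hCcl (Finset.mem_coe.2 hvC) (Finset.mem_coe.2 hy) (Ne.symm hyv))
            · rcases hy with rfl | hy
              · by_cases hxv : x = v
                · subst hxv; exact hadj
                · exact ((htwin x hxv hxy).2
                    (hCcl (Finset.mem_coe.2 hvC) (Finset.mem_coe.2 hx) (Ne.symm hxv))).symm
              · exact hCcl (Finset.mem_coe.2 hx) (Finset.mem_coe.2 hy) hxy
          have hv'C : v' ∉ C := fun h => (Finset.mem_erase.1 (hCT' h)).1 rfl
          have hsub : insert v' C ⊆ T := by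
            intro x hx
            rcases Finset.mem_insert.1 hx with rfl | hx
            · exact h2
            · exact hT'T (hCT' hx)
          have hbig : m' + 1 ≤ omegaIn (blowup G) T := by
            have := clique_card_le_omegaIn hsub hCext
            rwa [Finset.card_insert_of_notMem hv'C, hCcard] at this
          refine GoodCol.mono ⟨fun p => if p = v' then m' else f p, ?_, ?_⟩ hbig
          · intro a ha
            simp only []
            split_ifs with h
            · omega
            · exact lt_of_lt_of_le (hflt a (Finset.mem_erase.2 ⟨h, ha⟩)) (Nat.le_succ _)
          · intro a ha b hb hadj' heq
            simp only [] at heq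
            split_ifs at heq with hc1 hc2 hc2
            · exact (blowup G).irrefl (hc1 ▸ hc2 ▸ hadj')
            · exact absurd heq.symm
                (Nat.ne_of_lt (hflt b (Finset.mem_erase.2 ⟨hc2, hb⟩)))
            · exact absurd heq (Nat.ne_of_lt (hflt a (Finset.mem_erase.2 ⟨hc1, ha⟩)))
            · exact hfprop a (Finset.mem_erase.2 ⟨hc1, ha⟩) b
                (Finset.mem_erase.2 ⟨hc2, hb⟩) hadj' heq
        · -- no maximum clique of T' contains v
          push_neg at hyes
          set T'' : Finset (V × ℕ) := T'.filter (fun p => f p ≠ f v ∨ p = v) with hT''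
          have hT''T' : T'' ⊆ T' := Finset.filter_subset _ _
          have hT''card : T''.card ≤ N := le_trans (Finset.card_le_card hT''T') hT'card
          have homega'' : omegaIn (blowup G) T'' ≤ m' - 1 := by
            refine omegaIn_le fun C hC hcl => ?_
            by_contra hlt
            push_neg at hlt
            have hCT' : C ⊆ T' := hC.trans hT''T'
            have hCle : C.card ≤ m' := clique_card_le_omegaIn hCT' hcl
            have hCcard : C.card = m' := by omega
            -- all colours occur on C, in particular f v
            have hinj : Set.InjOn f ↑C := by
              intro x hx y hy hxy
              by_contra hne
              exact hfprop x (hCT' (Finset.mem_coe.1 hx)) y (hCT' (Finset.mem_coe.1 hy))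
                (hcl hx hy hne) hxy
            have himage : C.image f ⊆ Finset.range m' := by
              intro c hc
              obtain ⟨p, hp, rfl⟩ := Finset.mem_image.1 hc
              exact Finset.mem_range.2 (hflt p (hCT' hp))
            have himeq : C.image f = Finset.range m' := by
              apply Finset.eq_of_subset_of_card_le himage
              rw [Finset.card_image_of_injOn hinj, hCcard, Finset.card_range]
            have hfvmem : f v ∈ C.image f := by
              rw [himeq]
              exact Finset.mem_range.2 (hflt v hvT')
            obtain ⟨p, hpC, hpfv⟩ := Finset.mem_image.1 hfvmem
            have hpT'' : p ∈ T'' := hC hpC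
            have hpv : p = v := by
              rcases (Finset.mem_filter.1 hpT'').2 with h | h
              · exact absurd hpfv h
              · exact h
            subst hpv
            exact hyes C hCT' hcl hCcard hpC
          obtain ⟨g, hglt, hgprop⟩ := IH T'' hT''card
          have hglt' : ∀ p ∈ T'', g p < m' - 1 := fun p hp =>
            lt_of_lt_of_le (hglt p hp) homega''
          have hmle : m' ≤ omegaIn (blowup G) T := omegaIn_mono hT'T
          refine GoodCol.mono (m := m') ⟨fun p => if p ∈ T'' then g p else m' - 1, ?_, ?_⟩ hmle
          · intro a _
            simp only []
            split_ifs with h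
            · exact lt_of_lt_of_le (hglt' a h) (Nat.sub_le _ _)
            · omega
          · intro a ha b hb hadj' heq
            simp only [] at heq
            -- characterisation of elements of T not in T''
            have hchar : ∀ r, r ∈ T → r ∉ T'' → r ≠ v' → r ∈ T' ∧ f r = f v ∧ r ≠ v := by
              intro r hrT hrT'' hrv'
              have hrT' : r ∈ T' := Finset.mem_erase.2 ⟨hrv', hrT⟩
              refine ⟨hrT', ?_, ?_⟩
              · by_contra hne
                exact hrT'' (Finset.mem_filter.2 ⟨hrT', Or.inl hne⟩)
              · intro hrv
                exact hrT'' (Finset.mem_filter.2 ⟨hrT', Or.inr hrv⟩)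
            split_ifs at heq with hc1 hc2 hc2
            · exact hgprop a hc1 b hc2 hadj' heq
            · exact absurd heq (Nat.ne_of_lt (hglt' a hc1))
            · exact absurd heq.symm (Nat.ne_of_lt (hglt' b hc2))
            · -- both outside T''
              by_cases hav' : a = v' <;> by_cases hbv' : b = v'
              · exact (blowup G).irrefl (hav' ▸ hbv' ▸ hadj')
              · obtain ⟨hbT', hfb, hbv⟩ := hchar b hb hc2 hbv'
                subst hav'
                have : (blowup G).Adj v b := (htwin b hbv (fun h => (blowup G).irrefl
                  (h ▸ hadj'))).1 hadj'
                exact hfprop v hvT' b hbT' this hfb.symm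
              · obtain ⟨haT', hfa, hav⟩ := hchar a ha hc1 hav'
                subst hbv'
                have : (blowup G).Adj v a := (htwin a hav (fun h => (blowup G).irrefl
                  (h ▸ hadj'.symm))).1 hadj'.symm
                exact (hfprop v hvT' a haT' this hfa.symm).elim
              · obtain ⟨haT', hfa, _⟩ := hchar a ha hc1 hav'
                obtain ⟨hbT', hfb, _⟩ := hchar b hb hc2 hbv'
                have := hfprop a haT' b hbT' hadj'
                rw [hfa, hfb] at this
                exact this rfl
      · -- no two clones of the same vertex: T embeds in G
        push_neg at hdup
        set S : Finset V := T.image Prod.fst with hS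
        obtain ⟨f, hflt, hfprop⟩ := hG S
        have homega : omegaIn G S ≤ omegaIn (blowup G) T := by
          refine omegaIn_le fun C hC hcl => ?_
          set C' : Finset (V × ℕ) := T.filter (fun p => p.1 ∈ C) with hC'
          have hC'cl : (blowup G).IsClique ↑C' := by
            intro x hx y hy hxy
            have hxm := Finset.mem_filter.1 (Finset.mem_coe.1 hx)
            have hym := Finset.mem_filter.1 (Finset.mem_coe.1 hy)
            by_cases hfst : x.1 = y.1
            · have : x.2 ≠ y.2 := by
                intro h
                exact hxy (Prod.ext hfst h)
              exact Or.inr ⟨hfst, this⟩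
            · exact Or.inl (hcl (Finset.mem_coe.2 hxm.2) (Finset.mem_coe.2 hym.2) hfst)
          have hsub : C ⊆ C'.image Prod.fst := by
            intro i hi
            obtain ⟨p, hpT, hp1⟩ := Finset.mem_image.1 (hC hi)
            exact Finset.mem_image.2 ⟨p, Finset.mem_filter.2 ⟨hpT, hp1.symm ▸ hi⟩, hp1⟩
          calc C.card ≤ (C'.image Prod.fst).card := Finset.card_le_card hsub
            _ ≤ C'.card := Finset.card_image_le
            _ ≤ omegaIn (blowup G) T :=
                clique_card_le_omegaIn (Finset.filter_subset _ _) hC'cl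
        refine GoodCol.mono (m := omegaIn G S) ⟨fun p => f p.1, ?_, ?_⟩ homega
        · intro a ha
          exact hflt a.1 (Finset.mem_image.2 ⟨a, ha, rfl⟩)
        · intro a ha b hb hadj' heq
          rcases hadj' with h | ⟨hfst, hsnd⟩
          · exact hfprop a.1 (Finset.mem_image.2 ⟨a, ha, rfl⟩) b.1
              (Finset.mem_image.2 ⟨b, hb, rfl⟩) h heq
          · obtain ⟨a1, a2⟩ := a
            obtain ⟨b1, b2⟩ := b
            dsimp at hfst hsnd
            subst hfst
            exact hdup a1 a2 b2 hsnd ha hb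
  exact fun T => main T.card T le_rfl

end Blowup

section Weighted

variable {V : Type*} [Fintype V] [DecidableEq V]

open Classical in
/-- Maximum `c`-weight of a clique of `G`. -/
noncomputable def omegaW (G : SimpleGraph V) (c : V → ℕ) : ℕ :=
  Finset.univ.powerset.sup
    (fun K : Finset V => if G.IsClique (↑K : Set V) then ∑ i ∈ K, c i else 0)

theorem clique_weight_le_omegaW {G : SimpleGraph V} {c : V → ℕ} {K : Finset V}
    (h : G.IsClique (↑K : Set V)) : ∑ i ∈ K, c i ≤ omegaW G c := by
  classical
  have := Finset.le_sup
    (f := fun K : Finset V => if G.IsClique (↑K : Set V) then ∑ i ∈ K, c i else 0)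
    (Finset.mem_powerset.2 (Finset.subset_univ K))
  simpa [omegaW, h] using this

theorem exists_max_weight_clique (G : SimpleGraph V) (c : V → ℕ) :
    ∃ K : Finset V, G.IsClique (↑K : Set V) ∧ ∑ i ∈ K, c i = omegaW G c := by
  classical
  obtain ⟨K, hK, heq⟩ := Finset.exists_mem_eq_sup Finset.univ.powerset
    ⟨∅, Finset.mem_powerset.2 (Finset.empty_subset _)⟩
    (fun K : Finset V => if G.IsClique (↑K : Set V) then ∑ i ∈ K, c i else 0)
  rw [show Finset.univ.powerset.sup
      (fun K : Finset V => if G.IsClique (↑K : Set V) then ∑ i ∈ K, c i else 0) = omegaW G c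
    from rfl] at heq
  by_cases hcl : G.IsClique (↑K : Set V)
  · exact ⟨K, hcl, by rw [heq, if_pos hcl]⟩
  · refine ⟨∅, by simp, ?_⟩
    rw [heq, if_neg hcl]
    simp

/-- The fundamental weighted bound: if `x ≥ 0` has stable-set sums at most 1, then the
`c`-weighted sum of `x` is at most the maximum `c`-weight of a clique. -/
theorem sum_mul_le_omegaW (G : SimpleGraph V)
    (hG : ∀ S : Finset V, GoodCol G S (omegaIn G S)) (c : V → ℕ) (x : V → ℝ)
    (hx0 : ∀ i, 0 ≤ x i)
    (hxS : ∀ S : Finset V, (∀ a ∈ S, ∀ b ∈ S, ¬ G.Adj a b) → ∑ i ∈ S, x i ≤ 1) :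
    ∑ i, (c i : ℝ) * x i ≤ (omegaW G c : ℝ) := by
  classical
  set T : Finset (V × ℕ) :=
    Finset.univ.biUnion (fun i => ({i} : Finset V) ×ˢ Finset.range (c i)) with hTdef
  have memT : ∀ p : V × ℕ, p ∈ T ↔ p.2 < c p.1 := by
    rintro ⟨p1, p2⟩
    simp [hTdef, Finset.mem_biUnion, Finset.mem_product, eq_comm]
  obtain ⟨f, hflt, hfprop⟩ := blowup_goodCol G hG T
  set m := omegaIn (blowup G) T with hm
  -- step 1 : m ≤ omegaW G c
  have hm_le : m ≤ omegaW G c := by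
    refine omegaIn_le fun C hC hcl => ?_
    set K : Finset V := C.image Prod.fst with hK
    have hKcl : G.IsClique (↑K : Set V) := by
      intro a ha b hb hab
      simp only [hK, Finset.coe_image, Set.mem_image, Finset.mem_coe] at ha hb
      obtain ⟨p, hp, rfl⟩ := ha
      obtain ⟨q, hq, rfl⟩ := hb
      rcases hcl (Finset.mem_coe.2 hp) (Finset.mem_coe.2 hq)
          (fun h => hab (by rw [h])) with h | ⟨h1, _⟩
      · exact h
      · exact absurd h1 hab
    have hcard : C.card ≤ ∑ i ∈ K, c i := by
      rw [Finset.card_eq_sum_card_image Prod.fst]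
      refine Finset.sum_le_sum fun i _ => ?_
      refine le_trans (Finset.card_le_card_of_injOn (fun p => p.2) ?_ ?_)
        (by simp [Finset.card_range] : (Finset.range (c i)).card ≤ c i)
      · intro p hp
        have hp' := Finset.mem_filter.1 hp
        have := (memT p).1 (hC hp'.1)
        rw [hp'.2] at this
        exact Finset.mem_range.2 this
      · intro p hp q hq hpq
        have hp' := Finset.mem_filter.1 hp
        have hq' := Finset.mem_filter.1 hq
        exact Prod.ext (hp'.2.trans hq'.2.symm) hpq
    exact hcard.trans (clique_weight_le_omegaW hKcl)
  -- step 2 : the weighted sum equals the sum over T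
  have hsum : ∑ p ∈ T, x p.1 = ∑ i, (c i : ℝ) * x i := by
    rw [hTdef, Finset.sum_biUnion]
    · refine Finset.sum_congr rfl fun i _ => ?_
      rw [Finset.sum_product]
      simp [Finset.sum_const, mul_comm]
    · intro a _ b _ hab
      simp only [Finset.disjoint_left, Finset.mem_product, Finset.mem_singleton]
      rintro ⟨p1, p2⟩ ⟨rfl, -⟩ ⟨h, -⟩
      exact hab h
  -- step 3 : the sum over T is at most m
  have hTle : ∑ p ∈ T, x p.1 ≤ (m : ℝ) := by
    have hmaps : ∀ p ∈ T, f p ∈ Finset.range m := fun p hp => Finset.mem_range.2 (hflt p hp)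
    rw [← Finset.sum_fiberwise_of_maps_to hmaps (fun p => x p.1)]
    have hfiber : ∀ j ∈ Finset.range m, ∑ p ∈ T.filter (fun p => f p = j), x p.1 ≤ 1 := by
      intro j _
      set F := T.filter (fun p => f p = j) with hF
      have hinj : ∀ p ∈ F, ∀ q ∈ F, p.1 = q.1 → p = q := by
        intro p hp q hq hfst
        by_contra hne
        have hp' := Finset.mem_filter.1 hp
        have hq' := Finset.mem_filter.1 hq
        have hsnd : p.2 ≠ q.2 := fun h => hne (Prod.ext hfst h)
        exact hfprop p hp'.1 q hq'.1 (Or.inr ⟨hfst, hsnd⟩) (hp'.2.trans hq'.2.symm)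
      have himg : ∑ i ∈ F.image Prod.fst, x i = ∑ p ∈ F, x p.1 :=
        Finset.sum_image hinj
      rw [← himg]
      refine hxS _ ?_
      intro a ha b hb hadj
      obtain ⟨p, hp, rfl⟩ := Finset.mem_image.1 ha
      obtain ⟨q, hq, rfl⟩ := Finset.mem_image.1 hb
      have hp' := Finset.mem_filter.1 hp
      have hq' := Finset.mem_filter.1 hq
      exact hfprop p hp'.1 q hq'.1 (Or.inl hadj) (hp'.2.trans hq'.2.symm)
    calc ∑ j ∈ Finset.range m, ∑ p ∈ T.filter (fun p => f p = j), x p.1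
        ≤ ∑ _j ∈ Finset.range m, (1 : ℝ) := Finset.sum_le_sum hfiber
      _ = m := by simp
  calc ∑ i, (c i : ℝ) * x i = ∑ p ∈ T, x p.1 := hsum.symm
    _ ≤ (m : ℝ) := hTle
    _ ≤ (omegaW G c : ℝ) := Nat.cast_le.2 hm_le

open Classical in
/-- The finset of all cliques of `G`. -/
noncomputable def cliquesFinset' (G : SimpleGraph V) : Finset (Finset V) :=
  Finset.univ.powerset.filter (fun K => G.IsClique (↑K : Set V))

theorem cliquesFinset'_nonempty (G : SimpleGraph V) : (cliquesFinset' G).Nonempty := by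
  classical
  exact ⟨∅, by simp [cliquesFinset']⟩

theorem mem_cliquesFinset' {G : SimpleGraph V} {K : Finset V} :
    K ∈ cliquesFinset' G ↔ G.IsClique (↑K : Set V) := by
  classical
  simp [cliquesFinset']

/-- Real-weighted version, by approximation with natural weights. -/
theorem sum_mul_le_clique_sup (G : SimpleGraph V)
    (hG : ∀ S : Finset V, GoodCol G S (omegaIn G S)) (c : V → ℝ) (hc : ∀ i, 0 ≤ c i)
    (x : V → ℝ) (hx0 : ∀ i, 0 ≤ x i)
    (hxS : ∀ S : Finset V, (∀ a ∈ S, ∀ b ∈ S, ¬ G.Adj a b) → ∑ i ∈ S, x i ≤ 1) :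
    ∑ i, c i * x i ≤
      (cliquesFinset' G).sup' (cliquesFinset'_nonempty G) (fun K => ∑ i ∈ K, c i) := by
  classical
  set t := (cliquesFinset' G).sup' (cliquesFinset'_nonempty G) (fun K => ∑ i ∈ K, c i)
    with ht
  refine le_of_forall_pos_le_add fun ε hε => ?_
  obtain ⟨N, hN⟩ := exists_nat_gt ((Fintype.card V : ℝ) / ε)
  have hNpos : 0 < (N : ℝ) := lt_of_le_of_lt (div_nonneg (Nat.cast_nonneg _) hε.le) hN
  set c' : V → ℕ := fun i => ⌈c i * N⌉₊ with hc'
  have hnat := sum_mul_le_omegaW G hG c' x hx0 hxS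
  obtain ⟨K₀, hK₀cl, hK₀⟩ := exists_max_weight_clique G c'
  have hup : (omegaW G c' : ℝ) ≤ (N : ℝ) * t + Fintype.card V := by
    rw [← hK₀]
    push_cast
    have h1 : ∑ i ∈ K₀, (c' i : ℝ) ≤ ∑ i ∈ K₀, (c i * N + 1) := by
      refine Finset.sum_le_sum fun i _ => ?_
      exact le_of_lt (Nat.ceil_lt_add_one (mul_nonneg (hc i) (Nat.cast_nonneg _)))
    have h2 : ∑ i ∈ K₀, (c i * N + 1) = (N : ℝ) * ∑ i ∈ K₀, c i + K₀.card := by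
      rw [Finset.sum_add_distrib, ← Finset.sum_mul]
      simp [mul_comm]
    have h3 : ∑ i ∈ K₀, c i ≤ t :=
      Finset.le_sup' (f := fun K => ∑ i ∈ K, c i) (mem_cliquesFinset'.2 hK₀cl)
    have h4 : (K₀.card : ℝ) ≤ Fintype.card V := by
      exact_mod_cast Finset.card_le_card (Finset.subset_univ K₀)
    calc ∑ i ∈ K₀, (c' i : ℝ) ≤ ∑ i ∈ K₀, (c i * N + 1) := h1
      _ = (N : ℝ) * ∑ i ∈ K₀, c i + K₀.card := h2
      _ ≤ (N : ℝ) * t + Fintype.card V := by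
          have := mul_le_mul_of_nonneg_left h3 hNpos.le
          linarith
  have hlow : (N : ℝ) * ∑ i, c i * x i ≤ ∑ i, (c' i : ℝ) * x i := by
    rw [Finset.mul_sum]
    refine Finset.sum_le_sum fun i _ => ?_
    have : c i * (N : ℝ) ≤ (c' i : ℝ) := Nat.le_ceil _
    calc (N : ℝ) * (c i * x i) = (c i * N) * x i := by ring
      _ ≤ (c' i : ℝ) * x i := mul_le_mul_of_nonneg_right this (hx0 i)
  have : (N : ℝ) * ∑ i, c i * x i ≤ (N : ℝ) * t + Fintype.card V :=
    le_trans hlow (le_trans hnat hup)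
  have hcard : (Fintype.card V : ℝ) ≤ ε * N := by
    rw [div_lt_iff₀ hε] at hN
    · linarith [hN]
  calc ∑ i, c i * x i = ((N : ℝ) * ∑ i, c i * x i) / N := by
        field_simp
    _ ≤ ((N : ℝ) * t + Fintype.card V) / N := by
        exact (div_le_div_iff_of_pos_right hNpos).2 this
    _ ≤ ((N : ℝ) * t + ε * N) / N := by
        refine (div_le_div_iff_of_pos_right hNpos).2 ?_
        linarith
    _ = t + ε := by
        field_simp

end Weighted

section Separation

/-- A point dominated by every linear functional's max over a finite set lies in its
convex hull. -/
theorem mem_convexHull_of_linear_bound {d : ℕ} (P : Finset (Fin d → ℝ)) (hP : P.Nonempty)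
    (x : Fin d → ℝ)
    (h : ∀ c : Fin d → ℝ, ∑ i, c i * x i ≤ P.sup' hP (fun p => ∑ i, c i * p i)) :
    x ∈ convexHull ℝ (↑P : Set (Fin d → ℝ)) := by
  classical
  by_contra hx
  obtain ⟨f, u, hfa, hfx⟩ := geometric_hahn_banach_closed_point
    (convex_convexHull ℝ _) (P.finite_toSet.isClosed_convexHull (𝕜 := ℝ)) hx
  set c : Fin d → ℝ := fun i => f (fun j => if i = j then 1 else 0) with hc
  have hrep : ∀ y : Fin d → ℝ, f y = ∑ i, c i * y i := by
    intro y
    conv_lhs => rw [pi_eq_sum_univ y]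
    rw [map_sum]
    refine Finset.sum_congr rfl fun i _ => ?_
    rw [map_smul]
    simp [hc, smul_eq_mul, mul_comm]
  have hle := h c
  have hsup : P.sup' hP (fun p => ∑ i, c i * p i) < u := by
    refine (Finset.sup'_lt_iff hP).2 fun p hp => ?_
    rw [← hrep p]
    exact hfa p (subset_convexHull ℝ _ hp)
  rw [← hrep x] at hle
  exact absurd (lt_of_le_of_lt (hle.trans hsup.le) hfx) (lt_irrefl _)

end Separation

section QStab

/-- The 0/1-indicator vector of a finset. -/
def indicVec {n : ℕ} (K : Finset (Fin n)) : Fin n → ℝ := fun i => if i ∈ K then 1 else 0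

theorem indicVec_nonneg {n : ℕ} (K : Finset (Fin n)) (i : Fin n) : 0 ≤ indicVec K i := by
  simp only [indicVec]; split_ifs <;> norm_num

theorem sum_mul_indicVec {n : ℕ} (K : Finset (Fin n)) (c : Fin n → ℝ) :
    ∑ i, c i * indicVec K i = ∑ i ∈ K, c i := by
  classical
  have h : ∀ i, c i * indicVec K i = if i ∈ K then c i else 0 := by
    intro i
    simp only [indicVec]
    split_ifs <;> ring
  rw [Finset.sum_congr rfl (fun i _ => h i), Finset.sum_ite_mem, Finset.univ_inter]

/-- `QSTAB(Ḡ) ⊆ STAB(Ḡ)` for a perfect graph `G` : any nonnegative vector whose sums over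
stable sets of `G` are at most 1 is a convex combination of indicators of cliques of `G`. -/
theorem qstab_subset_stab {n : ℕ} (G : SimpleGraph (Fin n))
    (hG : ∀ S : Finset (Fin n), GoodCol G S (omegaIn G S))
    (x : Fin n → ℝ) (hx0 : ∀ i, 0 ≤ x i)
    (hxS : ∀ S : Finset (Fin n), IsStable G S → ∑ i ∈ S, x i ≤ 1) :
    x ∈ convexHull ℝ {y : Fin n → ℝ | ∃ K : Finset (Fin n),
      G.IsClique (↑K : Set (Fin n)) ∧ y = indicVec K} := by
  classical
  set P : Finset (Fin n → ℝ) := (cliquesFinset' G).image indicVec with hP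
  have hPne : P.Nonempty := (cliquesFinset'_nonempty G).image _
  have hPsub : (↑P : Set (Fin n → ℝ)) ⊆ {y : Fin n → ℝ | ∃ K : Finset (Fin n),
      G.IsClique (↑K : Set (Fin n)) ∧ y = indicVec K} := by
    intro y hy
    obtain ⟨K, hK, rfl⟩ := Finset.mem_image.1 (Finset.mem_coe.1 hy)
    exact ⟨K, mem_cliquesFinset'.1 hK, rfl⟩
  refine convexHull_mono hPsub ?_
  refine mem_convexHull_of_linear_bound P hPne x fun c => ?_
  -- reduce to the nonnegative part of c
  set c' : Fin n → ℝ := fun i => max (c i) 0 with hc'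
  have hc'0 : ∀ i, 0 ≤ c' i := fun i => le_max_right _ _
  have h1 : ∑ i, c i * x i ≤ ∑ i, c' i * x i :=
    Finset.sum_le_sum fun i _ => mul_le_mul_of_nonneg_right (le_max_left _ _) (hx0 i)
  have h2 := sum_mul_le_clique_sup G hG c' hc'0 x hx0
    (fun S hS => hxS S (fun a ha b hb => hS a ha b hb))
  -- the c'-max over cliques is at most the c-sup over P
  have h3 : (cliquesFinset' G).sup' (cliquesFinset'_nonempty G) (fun K => ∑ i ∈ K, c' i) ≤
      P.sup' hPne (fun p => ∑ i, c i * p i) := by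
    refine Finset.sup'_le _ _ fun K hK => ?_
    set K' : Finset (Fin n) := K.filter (fun i => 0 < c i) with hK'
    have hK'cl : G.IsClique (↑K' : Set (Fin n)) :=
      (mem_cliquesFinset'.1 hK).subset (by
        intro a ha
        exact Finset.mem_coe.2 (Finset.mem_filter.1 (Finset.mem_coe.1 ha)).1)
    have : ∑ i ∈ K, c' i = ∑ i ∈ K', c i := by
      rw [hK', Finset.sum_filter]
      refine Finset.sum_congr rfl fun i _ => ?_
      rcases lt_or_ge 0 (c i) with h | h
      · rw [if_pos h, hc']
        simp [max_eq_left h.le]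
      · rw [if_neg (not_lt.2 h), hc']
        simp [max_eq_right h]
    rw [this]
    have hmem : indicVec K' ∈ P := Finset.mem_image.2 ⟨K', mem_cliquesFinset'.2 hK'cl, rfl⟩
    have := Finset.le_sup' (f := fun p => ∑ i, c i * p i) hmem
    rwa [sum_mul_indicVec] at this
  exact h1.trans (h2.trans h3)

end QStab

section Hansen

/-- The diagonal scaling coefficients `(-1, 2, 2, …, 2)`. -/
noncomputable def dvec (n : ℕ) : Fin (n + 1) → ℝ := Fin.cases (-1) (fun _ => 2)

@[simp] theorem dvec_zero (n : ℕ) : dvec n 0 = -1 := by simp [dvec]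
@[simp] theorem dvec_succ {n : ℕ} (i : Fin n) : dvec n i.succ = 2 := by simp [dvec]

theorem dvec_ne_zero {n : ℕ} (j : Fin (n + 1)) : dvec n j ≠ 0 := by
  cases j using Fin.cases <;> simp

@[simp] theorem hansenVert_zero {n : ℕ} (I : Finset (Fin n)) : hansenVert I 0 = 1 := by
  simp [hansenVert]

@[simp] theorem hansenVert_succ {n : ℕ} (I : Finset (Fin n)) (i : Fin n) :
    hansenVert I i.succ = if i ∈ I then 1 else 0 := by simp [hansenVert]

/-- The diagonal linear automorphism `x ↦ (-x₀, 2x₁, …, 2xₙ)`. -/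
noncomputable def hansenDiag (n : ℕ) : (Fin (n + 1) → ℝ) ≃ₗ[ℝ] (Fin (n + 1) → ℝ) where
  toFun x := fun j => dvec n j * x j
  invFun x := fun j => (dvec n j)⁻¹ * x j
  map_add' x y := funext fun j => by simp [mul_add]
  map_smul' r x := funext fun j => by simp; ring
  left_inv x := funext fun j => by
    simp [← mul_assoc, inv_mul_cancel₀ (dvec_ne_zero j)]
  right_inv x := funext fun j => by
    simp [← mul_assoc, mul_inv_cancel₀ (dvec_ne_zero j)]

@[simp] theorem hansenDiag_apply {n : ℕ} (x : Fin (n + 1) → ℝ) (j : Fin (n + 1)) :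
    hansenDiag n x j = dvec n j * x j := rfl

theorem sum_mul_hansenVert {n : ℕ} (y : Fin (n + 1) → ℝ) (I : Finset (Fin n)) :
    ∑ j, y j * hansenVert I j = y 0 + ∑ i ∈ I, y i.succ := by
  classical
  rw [Fin.sum_univ_succ]
  congr 1
  · simp
  · have h : ∀ i : Fin n, y i.succ * hansenVert I i.succ = if i ∈ I then y i.succ else 0 := by
      intro i
      rw [hansenVert_succ]
      split_ifs <;> ring
    rw [Finset.sum_congr rfl (fun i _ => h i), Finset.sum_ite_mem, Finset.univ_inter]

theorem sum_mul_neg_right {n : ℕ} (y v : Fin n → ℝ) :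
    ∑ j, y j * (-v) j = -∑ j, y j * v j := by
  simp [mul_neg]

theorem diag_vert_pairing {n : ℕ} (K I : Finset (Fin n)) :
    ∑ j, hansenDiag n (hansenVert K) j * hansenVert I j = -1 + 2 * ((K ∩ I).card : ℝ) := by
  classical
  rw [Fin.sum_univ_succ]
  congr 1
  · simp
  · have h : ∀ i : Fin n, hansenDiag n (hansenVert K) i.succ * hansenVert I i.succ
        = if i ∈ K ∩ I then (2 : ℝ) else 0 := by
      intro i
      rw [hansenDiag_apply, dvec_succ, hansenVert_succ, hansenVert_succ]
      by_cases hK : i ∈ K <;> by_cases hI : i ∈ I <;>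
        simp [hK, hI, Finset.mem_inter]
    rw [Finset.sum_congr rfl (fun i _ => h i), Finset.sum_ite_mem, Finset.univ_inter,
      Finset.sum_const]
    simp [mul_comm]

theorem isStable_compl_iff {n : ℕ} {G : SimpleGraph (Fin n)} {K : Finset (Fin n)} :
    IsStable Gᶜ K ↔ G.IsClique (↑K : Set (Fin n)) := by
  constructor
  · intro h a ha b hb hab
    by_contra hadj
    exact h (Finset.mem_coe.1 ha) (Finset.mem_coe.1 hb) ((SimpleGraph.compl_adj G a b).2 ⟨hab, hadj⟩)
  · intro h a ha b hb hadj
    rw [SimpleGraph.compl_adj G a b] at hadj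
    exact hadj.2 (h (Finset.mem_coe.2 ha) (Finset.mem_coe.2 hb) hadj.1)

theorem card_inter_le_one {n : ℕ} {G : SimpleGraph (Fin n)} {K I : Finset (Fin n)}
    (hK : G.IsClique (↑K : Set (Fin n))) (hI : IsStable G I) : (K ∩ I).card ≤ 1 := by
  refine Finset.card_le_one.2 fun a ha b hb => ?_
  by_contra hab
  have haK := Finset.mem_inter.1 ha
  have hbK := Finset.mem_inter.1 hb
  exact hI haK.2 hbK.2 (hK (Finset.mem_coe.2 haK.1) (Finset.mem_coe.2 hbK.1) hab)

theorem convex_halfspace_sum {d : ℕ} (w : Fin d → ℝ) :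
    Convex ℝ {p : Fin d → ℝ | ∑ i, w i * p i ≤ 1} := by
  intro p hp q hq a b ha hb hab
  simp only [Set.mem_setOf_eq] at *
  have : ∑ i, w i * (a • p + b • q) i = a * (∑ i, w i * p i) + b * (∑ i, w i * q i) := by
    rw [Finset.mul_sum, Finset.mul_sum, ← Finset.sum_add_distrib]
    refine Finset.sum_congr rfl fun i _ => ?_
    simp only [Pi.add_apply, Pi.smul_apply, smul_eq_mul]
    ring
  rw [this]
  calc a * (∑ i, w i * p i) + b * (∑ i, w i * q i) ≤ a * 1 + b * 1 := by
        have := mul_le_mul_of_nonneg_left hp ha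
        have := mul_le_mul_of_nonneg_left hq hb
        linarith
    _ = 1 := by rw [mul_one, mul_one, hab]

theorem polarDual_convex {d : ℕ} (P : Set (Fin d → ℝ)) : Convex ℝ (polarDual P) := by
  intro y hy z hz a b ha hb hab
  intro x hx
  have h : ∑ i, (a • y + b • z) i * x i
      = a * (∑ i, y i * x i) + b * (∑ i, z i * x i) := by
    rw [Finset.mul_sum, Finset.mul_sum, ← Finset.sum_add_distrib]
    refine Finset.sum_congr rfl fun i _ => ?_
    simp only [Pi.add_apply, Pi.smul_apply, smul_eq_mul]
    ring
  rw [h]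
  calc a * (∑ i, y i * x i) + b * (∑ i, z i * x i) ≤ a * 1 + b * 1 := by
        have := mul_le_mul_of_nonneg_left (hy x hx) ha
        have := mul_le_mul_of_nonneg_left (hz x hx) hb
        linarith
    _ = 1 := by rw [mul_one, mul_one, hab]

/-- The linear lift `(Fin n → ℝ) → (Fin (n+1) → ℝ)` prepending a `0`. -/
noncomputable def liftL (n : ℕ) : (Fin n → ℝ) →ₗ[ℝ] (Fin (n + 1) → ℝ) where
  toFun u := Fin.cases 0 u
  map_add' u v := funext fun j => by
    cases j using Fin.cases <;> simp
  map_smul' r u := funext fun j => by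
    cases j using Fin.cases <;> simp

/-- The affine lift `u ↦ (1, u)`. -/
noncomputable def liftA (n : ℕ) : (Fin n → ℝ) →ᵃ[ℝ] (Fin (n + 1) → ℝ) where
  toFun u := Fin.cases 1 u
  linear := liftL n
  map_vadd' p v := funext fun j => by
    cases j using Fin.cases with
    | zero => simp [liftL]
    | succ i => simp [liftL]

@[simp] theorem liftA_apply {n : ℕ} (u : Fin n → ℝ) : liftA n u = Fin.cases 1 u := rfl

theorem liftA_indicVec {n : ℕ} (K : Finset (Fin n)) : liftA n (indicVec K) = hansenVert K := by
  funext j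
  cases j using Fin.cases with
  | zero => simp
  | succ i => simp [indicVec]

end Hansen


/-- For a perfect graph `G`, the polar dual of the Hansen polytope `H(G)` is affinely
equivalent to the Hansen polytope of the complement graph: some affine automorphism of
`ℝ^{n+1}` maps `H(Ḡ)` onto `H(G)°`. -/
theorem hansen_polar_dual {n : ℕ} (G : SimpleGraph (Fin n)) (hG : IsPerfect G) :
    ∃ f : (Fin (n + 1) → ℝ) ≃ᵃ[ℝ] (Fin (n + 1) → ℝ),
      f '' hansenPolytope Gᶜ = polarDual (hansenPolytope G) := by
  classical
  have hGcol : ∀ S : Finset (Fin n), GoodCol G S (omegaIn G S) := perfect_goodCol G hG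
  refine ⟨(hansenDiag n).toAffineEquiv, ?_⟩
  have hcoe : ⇑(hansenDiag n).toAffineEquiv = ⇑(hansenDiag n) :=
    LinearEquiv.coe_toAffineEquiv _
  rw [hcoe]
  -- the generating sets
  set genG : Set (Fin (n + 1) → ℝ) :=
    {x | ∃ I : Finset (Fin n), IsStable G I ∧ (x = hansenVert I ∨ x = -hansenVert I)}
    with hgenG
  set genC : Set (Fin (n + 1) → ℝ) :=
    {x | ∃ I : Finset (Fin n), IsStable Gᶜ I ∧ (x = hansenVert I ∨ x = -hansenVert I)}
    with hgenC
  have hHG : hansenPolytope G = convexHull ℝ genG := rfl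
  have hHC : hansenPolytope Gᶜ = convexHull ℝ genC := rfl
  -- key pairing bounds
  have pair_bound : ∀ K I : Finset (Fin n), G.IsClique (↑K : Set (Fin n)) → IsStable G I →
      |∑ j, hansenDiag n (hansenVert K) j * hansenVert I j| ≤ 1 := by
    intro K I hK hI
    rw [diag_vert_pairing]
    have h1 : ((K ∩ I).card : ℝ) ≤ 1 := by
      exact_mod_cast card_inter_le_one hK hI
    have h0 : (0 : ℝ) ≤ ((K ∩ I).card : ℝ) := Nat.cast_nonneg _
    rw [abs_le]
    constructor <;> linarith
  -- Forward inclusion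
  apply Set.Subset.antisymm
  · rw [hHC, ← LinearEquiv.coe_coe, LinearMap.image_convexHull]
    simp only [LinearEquiv.coe_coe]
    refine convexHull_min ?_ (polarDual_convex _)
    rintro z ⟨w, ⟨K, hKst, hw⟩, rfl⟩
    have hKcl : G.IsClique (↑K : Set (Fin n)) := isStable_compl_iff.1 hKst
    -- z = ± hansenDiag (hansenVert K); show z ∈ polarDual (hansenPolytope G)
    intro x hx
    rw [hHG] at hx
    have hhalf : convexHull ℝ genG ⊆
        {p : Fin (n + 1) → ℝ | ∑ i, hansenDiag n w i * p i ≤ 1} := by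
      refine convexHull_min ?_ (convex_halfspace_sum _)
      rintro p ⟨I, hIst, hp⟩
      have hb := pair_bound K I hKcl hIst
      rw [abs_le] at hb
      rcases hw with rfl | rfl <;> rcases hp with rfl | rfl <;>
        simp only [Set.mem_setOf_eq, map_neg, Pi.neg_apply, neg_mul,
          mul_neg, Finset.sum_neg_distrib, neg_neg, neg_le] <;>
        linarith [hb.1, hb.2]
    exact hhalf hx
  · -- Reverse inclusion
    intro y hy
    -- constraints from the polar dual
    have hup : ∀ I : Finset (Fin n), IsStable G I → y 0 + ∑ i ∈ I, y i.succ ≤ 1 := by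
      intro I hI
      have := hy (hansenVert I) (by
        rw [hHG]; exact subset_convexHull ℝ _ ⟨I, hI, Or.inl rfl⟩)
      rwa [sum_mul_hansenVert] at this
    have hdn : ∀ I : Finset (Fin n), IsStable G I → -(y 0 + ∑ i ∈ I, y i.succ) ≤ 1 := by
      intro I hI
      have := hy (-hansenVert I) (by
        rw [hHG]; exact subset_convexHull ℝ _ ⟨I, hI, Or.inr rfl⟩)
      rwa [sum_mul_neg_right, sum_mul_hansenVert] at this
    have hemp : IsStable G (∅ : Finset (Fin n)) := by
      intro a ha
      exact absurd ha (Finset.notMem_empty _)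
    have hy0le : y 0 ≤ 1 := by simpa using hup ∅ hemp
    have hy0ge : -1 ≤ y 0 := by
      have := hdn ∅ hemp
      simp only [Finset.sum_empty, add_zero] at this
      linarith
    -- the preimage point
    set x : Fin (n + 1) → ℝ := fun j => (dvec n j)⁻¹ * y j with hxdef
    have hfx : hansenDiag n x = y := by
      funext j
      rw [hansenDiag_apply, hxdef]
      rw [← mul_assoc, mul_inv_cancel₀ (dvec_ne_zero j), one_mul]
    have hx0 : x 0 = -y 0 := by
      show (dvec n 0)⁻¹ * y 0 = -y 0
      rw [dvec_zero]
      norm_num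
    have hxsucc : ∀ i : Fin n, x i.succ = y i.succ / 2 := by
      intro i
      show (dvec n i.succ)⁻¹ * y i.succ = y i.succ / 2
      rw [dvec_succ]
      ring
    set lam : ℝ := (1 - y 0) / 2 with hlam
    have hlam0 : 0 ≤ lam := by rw [hlam]; linarith
    have hlam1 : lam ≤ 1 := by rw [hlam]; linarith
    set xp : Fin n → ℝ := fun i => max (y i.succ / 2) 0 with hxp
    set xm : Fin n → ℝ := fun i => max (-(y i.succ / 2)) 0 with hxm
    have hxp0 : ∀ i, 0 ≤ xp i := fun i => le_max_right _ _
    have hxm0 : ∀ i, 0 ≤ xm i := fun i => le_max_right _ _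
    -- stable-set constraints for xp and xm
    have hxpS : ∀ S : Finset (Fin n), IsStable G S → ∑ i ∈ S, xp i ≤ lam := by
      intro S hS
      set Sp : Finset (Fin n) := S.filter (fun i => 0 < y i.succ) with hSp
      have hSpst : IsStable G Sp := fun a ha b hb =>
        hS (Finset.mem_filter.1 ha).1 (Finset.mem_filter.1 hb).1
      have heq : ∑ i ∈ S, xp i = ∑ i ∈ Sp, y i.succ / 2 := by
        rw [hSp, Finset.sum_filter]
        refine Finset.sum_congr rfl fun i _ => ?_
        rw [hxp]
        rcases lt_or_ge 0 (y i.succ) with h | h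
        · rw [if_pos h]
          exact max_eq_left (by linarith)
        · rw [if_neg (not_lt.2 h)]
          exact max_eq_right (by linarith)
      rw [heq, ← Finset.sum_div]
      have := hup Sp hSpst
      rw [hlam]
      linarith
    have hxmS : ∀ S : Finset (Fin n), IsStable G S → ∑ i ∈ S, xm i ≤ 1 - lam := by
      intro S hS
      set Sm : Finset (Fin n) := S.filter (fun i => y i.succ < 0) with hSm
      have hSmst : IsStable G Sm := fun a ha b hb =>
        hS (Finset.mem_filter.1 ha).1 (Finset.mem_filter.1 hb).1
      have heq : ∑ i ∈ S, xm i = ∑ i ∈ Sm, -(y i.succ / 2) := by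
        rw [hSm, Finset.sum_filter]
        refine Finset.sum_congr rfl fun i _ => ?_
        rw [hxm]
        rcases lt_or_ge (y i.succ) 0 with h | h
        · rw [if_pos h]
          apply max_eq_left
          linarith
        · rw [if_neg (not_lt.2 h)]
          apply max_eq_right
          linarith
      rw [heq]
      have hsum : ∑ i ∈ Sm, -(y i.succ / 2) = -((∑ i ∈ Sm, y i.succ) / 2) := by
        rw [Finset.sum_div]
        exact Finset.sum_neg_distrib _
      rw [hsum]
      have := hdn Sm hSmst
      rw [hlam]
      linarith
    -- the two convex-combination pieces
    set a : Fin n → ℝ := if lam = 0 then 0 else lam⁻¹ • xp with ha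
    set b : Fin n → ℝ := if lam = 1 then 0 else (1 - lam)⁻¹ • xm with hb
    have hlamxp : ∀ i, lam * a i = xp i := by
      intro i
      rw [ha]
      split_ifs with h
      · have h1 : xp i ≤ 0 := by
          have hsing : IsStable G ({i} : Finset (Fin n)) := by
            intro c hc d hd
            rw [Finset.mem_singleton] at hc hd
            subst hc; subst hd
            exact G.irrefl
          have := hxpS {i} hsing
          rw [Finset.sum_singleton, h] at this
          exact this
        have : xp i = 0 := le_antisymm h1 (hxp0 i)
        simp [h, this]
      · simp only [Pi.smul_apply, smul_eq_mul]
        rw [← mul_assoc, mul_inv_cancel₀ h, one_mul]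
    have hlamxm : ∀ i, (1 - lam) * b i = xm i := by
      intro i
      rw [hb]
      split_ifs with h
      · have h1 : xm i ≤ 0 := by
          have hsing : IsStable G ({i} : Finset (Fin n)) := by
            intro c hc d hd
            rw [Finset.mem_singleton] at hc hd
            subst hc; subst hd
            exact G.irrefl
          have := hxmS {i} hsing
          rw [Finset.sum_singleton, h] at this
          simpa using this
        have : xm i = 0 := le_antisymm h1 (hxm0 i)
        simp [h, this]
      · have h' : (1 : ℝ) - lam ≠ 0 := fun hc => h (by linarith [sub_eq_zero.1 hc])
        simp only [Pi.smul_apply, smul_eq_mul]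
        rw [← mul_assoc, mul_inv_cancel₀ h', one_mul]
    -- membership of a and b in STAB of the complement
    have ha_mem : a ∈ convexHull ℝ {u : Fin n → ℝ | ∃ K : Finset (Fin n),
        G.IsClique (↑K : Set (Fin n)) ∧ u = indicVec K} := by
      refine qstab_subset_stab G hGcol a ?_ ?_
      · intro i
        rw [ha]
        split_ifs with h
        · simp
        · exact mul_nonneg (inv_nonneg.2 hlam0) (hxp0 i)
      · intro S hS
        rw [ha]
        split_ifs with h
        · simp
        · have hpos : 0 < lam := lt_of_le_of_ne hlam0 (Ne.symm h)
          have := hxpS S hS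
          simp only [Pi.smul_apply, smul_eq_mul]
          rw [← Finset.mul_sum]
          rw [inv_mul_le_iff₀ hpos, mul_one]
          exact this
    have hb_mem : b ∈ convexHull ℝ {u : Fin n → ℝ | ∃ K : Finset (Fin n),
        G.IsClique (↑K : Set (Fin n)) ∧ u = indicVec K} := by
      refine qstab_subset_stab G hGcol b ?_ ?_
      · intro i
        rw [hb]
        split_ifs with h
        · simp
        · refine mul_nonneg (inv_nonneg.2 ?_) (hxm0 i)
          linarith
      · intro S hS
        rw [hb]
        split_ifs with h
        · simp
        · have hpos : 0 < 1 - lam := by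
            rcases lt_or_eq_of_le hlam1 with hlt | heq
            · linarith
            · exact absurd heq h
          have := hxmS S hS
          simp only [Pi.smul_apply, smul_eq_mul]
          rw [← Finset.mul_sum]
          rw [inv_mul_le_iff₀ hpos, mul_one]
          exact this
    -- lift to the Hansen polytope of the complement
    have hlift : ∀ u : Fin n → ℝ, u ∈ convexHull ℝ {u : Fin n → ℝ | ∃ K : Finset (Fin n),
        G.IsClique (↑K : Set (Fin n)) ∧ u = indicVec K} →
        liftA n u ∈ convexHull ℝ genC := by
      intro u hu
      have h1 : liftA n u ∈ liftA n '' convexHull ℝ {u : Fin n → ℝ | ∃ K : Finset (Fin n),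
          G.IsClique (↑K : Set (Fin n)) ∧ u = indicVec K} := Set.mem_image_of_mem _ hu
      rw [AffineMap.image_convexHull] at h1
      refine convexHull_mono ?_ h1
      rintro w ⟨u', ⟨K, hKcl, rfl⟩, rfl⟩
      exact ⟨K, isStable_compl_iff.2 hKcl, Or.inl (liftA_indicVec K)⟩
    have hneg : ∀ w : Fin (n + 1) → ℝ, w ∈ convexHull ℝ genC → -w ∈ convexHull ℝ genC := by
      intro w hw
      have h1 : -w ∈ (fun z => -z) '' convexHull ℝ genC := Set.mem_image_of_mem _ hw
      rw [show (fun z : Fin (n+1) → ℝ => -z) = ⇑(-(LinearMap.id (R := ℝ)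
        (M := Fin (n+1) → ℝ))) from rfl, LinearMap.image_convexHull] at h1
      refine convexHull_mono ?_ h1
      rintro z ⟨w', ⟨I, hI, hw'⟩, rfl⟩
      rcases hw' with rfl | rfl
      · exact ⟨I, hI, Or.inr rfl⟩
      · exact ⟨I, hI, Or.inl (by simp)⟩
    have hp_mem : liftA n a ∈ convexHull ℝ genC := hlift a ha_mem
    have hq_mem : -(liftA n b) ∈ convexHull ℝ genC := hneg _ (hlift b hb_mem)
    -- x is the convex combination
    have hxcomb : x = lam • liftA n a + (1 - lam) • (-(liftA n b)) := by
      funext j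
      simp only [Pi.add_apply, Pi.smul_apply, Pi.neg_apply, smul_eq_mul]
      cases j using Fin.cases with
      | zero =>
        rw [hx0]
        simp only [liftA_apply, Fin.cases_zero]
        rw [hlam]
        ring
      | succ i =>
        rw [hxsucc i]
        simp only [liftA_apply, Fin.cases_succ]
        rw [mul_neg]
        rw [hlamxp i, hlamxm i]
        simp only [hxp, hxm]
        rcases le_total (y i.succ / 2) 0 with h | h
        · rw [max_eq_right h, max_eq_left (by linarith : 0 ≤ -(y i.succ / 2))]
          ring
        · rw [max_eq_left h, max_eq_right (by linarith : -(y i.succ / 2) ≤ 0)]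
          ring
    have hx_mem : x ∈ convexHull ℝ genC := by
      rw [hxcomb]
      exact (convex_convexHull ℝ genC) hp_mem hq_mem hlam0 (by linarith) (by ring)
    exact ⟨x, by rw [hHC]; exact hx_mem, hfx⟩
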